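/- Let K be a number field of degree 2 over ℚ containing an element ω with ω² = Δ, where Δ is a positive integer that is not a perfect square with Δ ≡ 0 or 1 (mod 4). Let a and b be integers with a ≠ 0 and 4a ∣ b² − Δ, and set θ = (b + ω)/2 ∈ K. Then the ℤ-submodule M of K spanned by {a, θ} is closed under multiplication by θ (and hence is a module over the order ℤ[θ]), and the quotient of the ℤ-submodule spanned by {1, θ} by M is finite of cardinality |a|. -/

import Mathlib

/-- In a real quadratic field `K = ℚ(√Δ)` with `Δ ≡ 0, 1 (mod 4)`, for integers `a ≠ 0`
and `b` with `4a ∣ b² − Δ` and `θ = (b + √Δ)/2`, the ℤ-module `M` spanned by `{a, θ}`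
is closed under multiplication by `θ`, and the quotient of the ℤ-module spanned by
`{1, θ}` by `M` is finite of cardinality `|a|`. -/
theorem ideal_module_index
    (K : Type*) [Field K] [NumberField K]
    (h2 : Module.finrank ℚ K = 2)
    (Δ : ℤ) (hΔpos : 0 < Δ) (hΔns : ¬ IsSquare Δ)
    (hΔmod : Δ % 4 = 0 ∨ Δ % 4 = 1)
    (ω : K) (hω : ω ^ 2 = (Δ : K))
    (a b : ℤ) (ha : a ≠ 0) (hdiv : 4 * a ∣ b ^ 2 - Δ)
    (θ : K) (hθ : θ = ((b : K) + ω) / 2)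
    (M N : Submodule ℤ K)
    (hM : M = Submodule.span ℤ {(a : K), θ})
    (hN : N = Submodule.span ℤ {(1 : K), θ})
    (hMN : M ≤ N) :
    (∀ x ∈ M, θ * x ∈ M) ∧
      Finite (↥N ⧸ M.comap N.subtype) ∧
      Nat.card (↥N ⧸ M.comap N.subtype) = a.natAbs := by
  obtain ⟨c, hc⟩ := hdiv
  have hcK : (b : K) ^ 2 - (Δ : K) = 4 * a * c := by exact_mod_cast congrArg (Int.cast : ℤ → K) hc
  -- the key quadratic relation
  have hθ2 : ω = 2 * θ - (b : K) := by rw [hθ]; ring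
  have hω' : (2 * θ - (b : K)) ^ 2 = (Δ : K) := by rw [← hθ2]; exact hω
  have hrel : θ ^ 2 = (b : K) * θ - (a : K) * c := by
    linear_combination (1/4 : K) * hω' - (1/4 : K) * hcK
  -- independence of 1, θ over ℤ
  have hind : ∀ m n : ℤ, (m : K) + (n : K) * θ = 0 → m = 0 ∧ n = 0 := by
    intro m n h
    by_cases hn : n = 0
    · subst hn
      simp at h
      exact ⟨by exact_mod_cast h, rfl⟩
    · exfalso
      have hnK : (n : K) ≠ 0 := by exact_mod_cast hn
      have h2' : ((2 * m + n * b : ℤ) : K) + (n : K) * ω = 0 := by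
        push_cast
        rw [hθ] at h
        field_simp at h
        linear_combination h
      set s : ℤ := 2 * m + n * b with hs
      have hωq : ω = ((-s : ℚ) / n : ℚ) • (1 : K) := by
        have : (n : K) * ω = -(s : K) := by linear_combination h2'
        rw [Algebra.smul_def]
        simp only [mul_one, map_div₀, map_neg, map_intCast]
        rw [eq_div_iff hnK, mul_comm]
        exact this
      have hq2 : ((-s : ℚ) / n) ^ 2 = (Δ : ℚ) := by
        have hinj := (algebraMap ℚ K).injective
        apply hinj
        have : (algebraMap ℚ K) (((-s : ℚ) / n) ^ 2) = ω ^ 2 := by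
          rw [hωq]; rw [Algebra.smul_def, mul_one, ← map_pow]
        rw [this, hω]
        push_cast
        simp
      have hsZ : s ^ 2 = Δ * n ^ 2 := by
        have hnQ : (n : ℚ) ≠ 0 := by exact_mod_cast hn
        field_simp at hq2
        rw [mul_comm]
        exact_mod_cast hq2
      have hdvd : n ∣ s := by
        rw [← Int.pow_dvd_pow_iff (two_ne_zero)]
        exact ⟨Δ, by linarith⟩
      obtain ⟨t, ht⟩ := hdvd
      apply hΔns
      refine ⟨t, ?_⟩
      have hn2 : (n : ℤ) ^ 2 ≠ 0 := pow_ne_zero _ hn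
      have : Δ * n ^ 2 = (t * t) * n ^ 2 := by rw [← hsZ, ht]; ring
      exact mul_right_cancel₀ hn2 this
  -- part 1 : closure under multiplication by θ
  have hclosed : ∀ x ∈ M, θ * x ∈ M := by
    intro x hx
    rw [hM] at hx ⊢
    induction hx using Submodule.span_induction with
    | mem x hxs =>
      rcases hxs with h | h
      · rw [h, Submodule.mem_span_pair]
        exact ⟨0, a, by push_cast [zsmul_eq_mul]; ring⟩
      · rw [Set.mem_singleton_iff] at h
        rw [h, Submodule.mem_span_pair]
        exact ⟨-c, b, by push_cast [zsmul_eq_mul]; linear_combination -hrel⟩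
    | zero => simpa using Submodule.zero_mem _
    | add x y hx hy ihx ihy => rw [mul_add]; exact Submodule.add_mem _ ihx ihy
    | smul k x hx ih => rw [mul_smul_comm]; exact Submodule.smul_mem _ k ih
  refine ⟨hclosed, ?_⟩
  -- coefficients of elements of N
  have hexist : ∀ x : N, ∃ p : ℤ × ℤ, ((p.1 : K) + (p.2 : K) * θ = (x : K)) := by
    intro x
    have hx : (x : K) ∈ Submodule.span ℤ {(1 : K), θ} := by rw [← hN]; exact x.2
    rw [Submodule.mem_span_pair] at hx
    obtain ⟨m, n, hmn⟩ := hx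
    exact ⟨(m, n), by rw [← hmn]; push_cast [zsmul_eq_mul]; ring⟩
  choose co hco using hexist
  have huniq : ∀ (x : N) (m n : ℤ), (m : K) + (n : K) * θ = (x : K) →
      m = (co x).1 ∧ n = (co x).2 := by
    intro x m n h
    have h0 : ((m - (co x).1 : ℤ) : K) + ((n - (co x).2 : ℤ) : K) * θ = 0 := by
      push_cast
      linear_combination h - hco x
    obtain ⟨h1, h2⟩ := hind _ _ h0
    constructor <;> omega
  haveI : NeZero a.natAbs := ⟨by simpa using ha⟩
  -- linear map to ZMod |a|
  let f : N →ₗ[ℤ] ZMod a.natAbs :=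
    { toFun := fun x => (((co x).1 : ℤ) : ZMod a.natAbs)
      map_add' := by
        intro x y
        have h := huniq (x + y) ((co x).1 + (co y).1) ((co x).2 + (co y).2) (by
          push_cast
          linear_combination hco x + hco y)
        show (((co (x + y)).1 : ℤ) : ZMod a.natAbs)
            = (((co x).1 : ℤ) : ZMod a.natAbs) + (((co y).1 : ℤ) : ZMod a.natAbs)
        rw [← h.1]
        push_cast
        ring
      map_smul' := by
        intro k x
        have h := huniq (k • x) (k * (co x).1) (k * (co x).2) (by
          push_cast
          rw [zsmul_eq_mul]
          linear_combination (k : K) * hco x)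
        show (((co (k • x)).1 : ℤ) : ZMod a.natAbs)
            = k • (((co x).1 : ℤ) : ZMod a.natAbs)
        rw [← h.1, zsmul_eq_mul]
        push_cast
        ring }
  have hfker : ∀ x : N, f x = 0 ↔ (x : K) ∈ M := by
    intro x
    constructor
    · intro h
      have hdvd : a ∣ (co x).1 := by
        rwa [show f x = (((co x).1 : ℤ) : ZMod a.natAbs) from rfl,
          ZMod.intCast_zmod_eq_zero_iff_dvd, Int.natAbs_dvd] at h
      obtain ⟨t, ht⟩ := hdvd
      rw [hM, Submodule.mem_span_pair]
      refine ⟨t, (co x).2, ?_⟩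
      push_cast [zsmul_eq_mul]
      rw [← hco x, ht]
      push_cast
      ring
    · intro h
      rw [hM, Submodule.mem_span_pair] at h
      obtain ⟨m, n, hmn⟩ := h
      have h' := huniq x (m * a) n (by push_cast; rw [← hmn]; push_cast [zsmul_eq_mul]; ring)
      show (((co x).1 : ℤ) : ZMod a.natAbs) = 0
      rw [← h'.1, ZMod.intCast_zmod_eq_zero_iff_dvd, Int.natAbs_dvd]
      exact ⟨m, by ring⟩
  have hfsurj : Function.Surjective f := by
    intro k
    obtain ⟨m, hm⟩ := ZMod.intCast_surjective (n := a.natAbs) k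
    have hmem : ((m : K)) ∈ N := by
      rw [hN, Submodule.mem_span_pair]
      exact ⟨m, 0, by push_cast [zsmul_eq_mul]; ring⟩
    refine ⟨⟨(m : K), hmem⟩, ?_⟩
    have h := huniq ⟨(m : K), hmem⟩ m 0 (by push_cast; ring)
    show (((co ⟨(m : K), hmem⟩).1 : ℤ) : ZMod a.natAbs) = k
    rw [← h.1, hm]
  have hle : M.comap N.subtype ≤ LinearMap.ker f := by
    intro x hx
    rw [LinearMap.mem_ker, hfker]
    exact hx
  have hge : LinearMap.ker f ≤ M.comap N.subtype := by
    intro x hx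
    rw [LinearMap.mem_ker] at hx
    exact (hfker x).1 hx
  let F := Submodule.liftQ (M.comap N.subtype) f hle
  have hFinj : Function.Injective F :=
    LinearMap.ker_eq_bot.1 (Submodule.ker_liftQ_eq_bot _ _ hle hge)
  have hFsurj : Function.Surjective F := by
    intro k
    obtain ⟨x, hx⟩ := hfsurj k
    exact ⟨Submodule.Quotient.mk x, hx⟩
  have e : (↥N ⧸ M.comap N.subtype) ≃ ZMod a.natAbs :=
    Equiv.ofBijective F ⟨hFinj, hFsurj⟩
  refine ⟨Finite.of_equiv _ e.symm, ?_⟩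
  rw [Nat.card_congr e, Nat.card_zmod]
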